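/- In a complete stratified precubical set, if x ∘_k y is a composite such that x and y are thin n-cubes, then x ∘_k y is thin. -/

import Mathlib

namespace CubicalNerve

/-- Signs: `true` is `+`, `false` is `−`, as an integer `±1`. -/
def sgn (α : Bool) : ℤ := if α then 1 else -1

/-- A stratified precubical set: a sequence of sets `X n` with face operations
`∂_i^α : X n → X (n-1)` (with `i : Fin n`, i.e. `i+1` in the paper's 1-indexing)
satisfying the precubical relations, together with a class of thin `n`-cubes for
`n ≥ 1` (a `0`-cube is never thin). -/
structure SPS where
  X : ℕ → Type
  face : ∀ {n : ℕ}, Fin n → Bool → X n → X (n - 1)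
  face_rel : ∀ {n : ℕ} (j : Fin n) (i : Fin (n - 1)) (h : (j : ℕ) ≤ (i : ℕ)) (α β : Bool)
      (x : X n),
    face i α (face j β x) =
      face ⟨(j : ℕ), lt_of_le_of_lt h i.isLt⟩ β
        (face ⟨(i : ℕ) + 1, by have := i.isLt; omega⟩ α x)
  thin : ∀ {n : ℕ}, X n → Prop
  thin_zero : ∀ x : X 0, ¬ thin x

/-- The face operation `∂_i^α` with a 1-indexed natural number index (clamped into
range); the identity map in dimension `0`. -/
def SPS.faceN (P : SPS) (i : ℕ) (α : Bool) : ∀ {n : ℕ}, P.X n → P.X (n - 1)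
  | 0, x => x
  | m + 1, x =>
      P.face (⟨min (i - 1) m, Nat.lt_succ_of_le (Nat.min_le_right _ _)⟩ : Fin (m + 1)) α x

/-- The action of a nonidentity precubical operation, written as a nonempty list
`(p :: L)` of 1-indexed (index, sign) pairs composed right-to-left (so the last
entry of the list is applied first), on a box or shell `b` (given as a family of
`m`-cubes indexed by all of `Fin (m+1) × Bool`): the last factor picks out an entry
of `b`, and the remaining factors act by face operations. -/
def SPS.apBoxAux (P : SPS) {m : ℕ} (b : Fin (m + 1) → Bool → P.X m) :
    (ℕ × Bool) → (L : List (ℕ × Bool)) → P.X (m - L.length)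
  | p, [] => b ⟨min (p.1 - 1) m, Nat.lt_succ_of_le (Nat.min_le_right _ _)⟩ p.2
  | p, q :: L => P.faceN p.1 p.2 (P.apBoxAux b q L)

/-- `L` is the standard decomposition of a precubical operation on `n`-cubes:
its 1-indexed indices are strictly increasing and lie in `{1, …, n}`. -/
def IsStdList (n : ℕ) (L : List (ℕ × Bool)) : Prop :=
  L.Chain' (fun p q => p.1 < q.1) ∧ ∀ p ∈ L, 1 ≤ p.1 ∧ p.1 ≤ n

/-- Insertion of a factor into a standard decomposition, preserving the order. -/
def insSorted (a : ℕ × Bool) : List (ℕ × Bool) → List (ℕ × Bool)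
  | [] => [a]
  | p :: L => if a.1 ≤ p.1 then a :: p :: L else p :: insSorted a L

/-- The standard decomposition `L` has constant sign: `(−1)^{i(r)−r} α(r)` is the same
for all `r`, where `∂_{i(r)}^{α(r)}` is the `r`-th factor (`r` 1-indexed). -/
def ConstSign (L : List (ℕ × Bool)) : Prop :=
  ∃ ε : ℤ, ∀ (t : ℕ) (h : t < L.length),
    (-1 : ℤ) ^ ((L.get ⟨t, h⟩).1 + t + 1) * sgn (L.get ⟨t, h⟩).2 = ε

/-- The precubical operation with standard decomposition `L` (on `n`-cubes) is
complementary to the face operation `∂_k^γ` (`k` 1-indexed): `L` has no factor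
`∂_k^±`, and inserting `∂_k^{−γ}` produces a standard decomposition with constant
sign. -/
def ComplOp (n k : ℕ) (γ : Bool) (L : List (ℕ × Bool)) : Prop :=
  IsStdList n L ∧ (∀ p ∈ L, p.1 ≠ k) ∧ ConstSign (insSorted (k, !γ) L)

/-- The face operation `∂_l^δ` is complementary to `∂_k^γ` (1-indexed). -/
def FaceComplOp (n k : ℕ) (γ : Bool) (l : ℕ) (δ : Bool) : Prop := ComplOp n k γ [(l, δ)]

/-- `b` is an `(m+1)`-box opposite `∂_k^γ`, recorded as a total family of `m`-cubes
whose value at `(k, γ)` is irrelevant: the compatibility conditions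
`∂_i^α b_j^β = ∂_j^β b_{i+1}^α` hold whenever neither index involved is `(k, γ)`. -/
def SPS.IsBox (P : SPS) {m : ℕ} (k : Fin (m + 1)) (γ : Bool)
    (b : Fin (m + 1) → Bool → P.X m) : Prop :=
  ∀ (j : Fin (m + 1)) (i : Fin m) (h : (j : ℕ) ≤ (i : ℕ)) (α β : Bool),
    ((j, β) : Fin (m + 1) × Bool) ≠ (k, γ) →
    ((⟨(i : ℕ) + 1, by have := i.isLt; omega⟩, α) : Fin (m + 1) × Bool) ≠ (k, γ) →
    P.face i α (b j β) =
      P.face ⟨(j : ℕ), lt_of_le_of_lt h i.isLt⟩ β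
        (b ⟨(i : ℕ) + 1, by have := i.isLt; omega⟩ α)

/-- `s` is an `(m+1)`-shell: a family of `m`-cubes indexed by all the face operations,
with `∂_i^α s_j^β = ∂_j^β s_{i+1}^α` for `i ≥ j`. -/
def SPS.IsShell (P : SPS) {m : ℕ} (s : Fin (m + 1) → Bool → P.X m) : Prop :=
  ∀ (j : Fin (m + 1)) (i : Fin m) (h : (j : ℕ) ≤ (i : ℕ)) (α β : Bool),
    P.face i α (s j β) =
      P.face ⟨(j : ℕ), lt_of_le_of_lt h i.isLt⟩ β
        (s ⟨(i : ℕ) + 1, by have := i.isLt; omega⟩ α)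

/-- The box `b` opposite `∂_k^γ` is admissible: `θ b` is thin for every non-identity
precubical operation `θ` complementary to `∂_k^γ`. -/
def SPS.AdmBox (P : SPS) {m : ℕ} (k : Fin (m + 1)) (γ : Bool)
    (b : Fin (m + 1) → Bool → P.X m) : Prop :=
  P.IsBox k γ b ∧
  ∀ (p : ℕ × Bool) (L : List (ℕ × Bool)),
    ComplOp (m + 1) ((k : ℕ) + 1) γ (p :: L) → P.thin (P.apBoxAux b p L)

/-- The shell `s` is admissible: there are distinct, mutually non-complementary face
operations `∂_k^γ` and `∂_l^δ` with `s_k^γ = s_l^δ` such that the boxes obtained by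
removing either are admissible. -/
def SPS.AdmShell (P : SPS) {m : ℕ} (s : Fin (m + 1) → Bool → P.X m) : Prop :=
  P.IsShell s ∧
  ∃ (k l : Fin (m + 1)) (γ δ : Bool),
    ((k, γ) : Fin (m + 1) × Bool) ≠ (l, δ) ∧
    ¬ FaceComplOp (m + 1) ((k : ℕ) + 1) γ ((l : ℕ) + 1) δ ∧
    ¬ FaceComplOp (m + 1) ((l : ℕ) + 1) δ ((k : ℕ) + 1) γ ∧
    s k γ = s l δ ∧ P.AdmBox k γ s ∧ P.AdmBox l δ s

/-- `x` is a filler of the box `b` opposite `∂_k^γ`. -/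
def SPS.FillsBox (P : SPS) {m : ℕ} (k : Fin (m + 1)) (γ : Bool)
    (b : Fin (m + 1) → Bool → P.X m) (x : P.X (m + 1)) : Prop :=
  ∀ (i : Fin (m + 1)) (α : Bool), ((i, α) : Fin (m + 1) × Bool) ≠ (k, γ) →
    P.face i α x = b i α

/-- `x` is a filler of the shell `s`. -/
def SPS.FillsShell (P : SPS) {m : ℕ} (s : Fin (m + 1) → Bool → P.X m)
    (x : P.X (m + 1)) : Prop :=
  ∀ (i : Fin (m + 1)) (α : Bool), P.face i α x = s i α

/-- `P` is a *complete* stratified precubical set: every admissible box and every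
admissible shell has a unique thin filler, and if `x` is the thin filler of an
admissible box `b` opposite `∂_k^γ` all of whose entries are thin, then the
additional face `∂_k^γ x` is thin as well. -/
def SPS.IsComplete (P : SPS) : Prop :=
  (∀ (m : ℕ) (k : Fin (m + 1)) (γ : Bool) (b : Fin (m + 1) → Bool → P.X m),
     P.AdmBox k γ b → ∃! x : P.X (m + 1), P.thin x ∧ P.FillsBox k γ b x) ∧
  (∀ (m : ℕ) (s : Fin (m + 1) → Bool → P.X m),
     P.AdmShell s → ∃! x : P.X (m + 1), P.thin x ∧ P.FillsShell s x) ∧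
  (∀ (m : ℕ) (k : Fin (m + 1)) (γ : Bool) (b : Fin (m + 1) → Bool → P.X m)
     (x : P.X (m + 1)),
     P.AdmBox k γ b → P.thin x → P.FillsBox k γ b x →
     (∀ (i : Fin (m + 1)) (α : Bool), ((i, α) : Fin (m + 1) × Bool) ≠ (k, γ) →
        P.thin (b i α)) →
     P.thin (P.face k γ x))

/-- `E` is the system of degeneracy operations `ε` of a complete stratified precubical
set: `E n k x` (`x` an `n`-cube, `k : Fin (n+1)`, i.e. `ε_{k+1}` in 1-indexed notation)
is thin with faces `∂_i^α ε_k x = ε_{k-1} ∂_i^α x` for `i < k`, `∂_k^± ε_k x = x`,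
and `∂_i^α ε_k x = ε_k ∂_{i-1}^α x` for `i > k`. -/
def SPS.IsDegSys (P : SPS) (E : ∀ n : ℕ, Fin (n + 1) → P.X n → P.X (n + 1)) : Prop :=
  (∀ (n : ℕ) (k : Fin (n + 1)) (x : P.X n), P.thin (E n k x)) ∧
  (∀ (n : ℕ) (k : Fin (n + 1)) (α : Bool) (x : P.X n), P.face k α (E n k x) = x) ∧
  (∀ (n : ℕ) (k i : Fin (n + 2)) (α : Bool) (x : P.X (n + 1)) (h : (i : ℕ) < (k : ℕ)),
     P.face i α (E (n + 1) k x) =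
       E n ⟨(k : ℕ) - 1, by have := k.isLt; omega⟩
         (P.face ⟨(i : ℕ), by have := k.isLt; omega⟩ α x)) ∧
  (∀ (n : ℕ) (k i : Fin (n + 2)) (α : Bool) (x : P.X (n + 1)) (h : (k : ℕ) < (i : ℕ)),
     P.face i α (E (n + 1) k x) =
       E n ⟨(k : ℕ), by have := i.isLt; omega⟩
         (P.face ⟨(i : ℕ) - 1, by have := i.isLt; omega⟩ α x))

/-- `Γ` is the system of connection operations of a complete stratified precubical set
(`Γ n k γ x` for `x` an `(n+1)`-cube and `k : Fin (n+1)`, i.e. `Γ_{k+1}^γ`). -/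
def SPS.IsConnSys (P : SPS) (E : ∀ n : ℕ, Fin (n + 1) → P.X n → P.X (n + 1))
    (Γ : ∀ n : ℕ, Fin (n + 1) → Bool → P.X (n + 1) → P.X (n + 2)) : Prop :=
  (∀ (n : ℕ) (k : Fin (n + 1)) (γ : Bool) (x : P.X (n + 1)), P.thin (Γ n k γ x)) ∧
  (∀ (n : ℕ) (k : Fin (n + 1)) (γ : Bool) (x : P.X (n + 1)),
     P.face k.castSucc γ (Γ n k γ x) = x ∧ P.face k.succ γ (Γ n k γ x) = x) ∧
  (∀ (n : ℕ) (k : Fin (n + 1)) (γ : Bool) (x : P.X (n + 1)),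
     P.face k.castSucc (!γ) (Γ n k γ x) = E n k (P.face k (!γ) x) ∧
     P.face k.succ (!γ) (Γ n k γ x) = E n k (P.face k (!γ) x)) ∧
  (∀ (n : ℕ) (k : Fin (n + 2)) (γ : Bool) (i : Fin (n + 3)) (α : Bool) (x : P.X (n + 2))
     (h : (i : ℕ) < (k : ℕ)),
     P.face i α (Γ (n + 1) k γ x) =
       Γ n ⟨(k : ℕ) - 1, by have := k.isLt; omega⟩ γ
         (P.face ⟨(i : ℕ), by have := k.isLt; omega⟩ α x)) ∧
  (∀ (n : ℕ) (k : Fin (n + 2)) (γ : Bool) (i : Fin (n + 3)) (α : Bool) (x : P.X (n + 2))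
     (h : (k : ℕ) + 1 < (i : ℕ)),
     P.face i α (Γ (n + 1) k γ x) =
       Γ n ⟨(k : ℕ), by have := i.isLt; omega⟩ γ
         (P.face ⟨(i : ℕ) - 1, by have := i.isLt; omega⟩ α x))

/-- `G` is the system of composers of a complete stratified precubical set:
whenever `∂_k^+ x = ∂_k^- y`, the `(n+2)`-cube `G n k x y` is thin and has the faces
prescribed in the definition of the composer `G_k(x, y)` (all of them except the one
opposite `∂_k^-`). -/
def SPS.IsCompSys (P : SPS) (E : ∀ n : ℕ, Fin (n + 1) → P.X n → P.X (n + 1))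
    (G : ∀ n : ℕ, Fin (n + 1) → P.X (n + 1) → P.X (n + 1) → P.X (n + 2)) : Prop :=
  (∀ (n : ℕ) (k : Fin (n + 1)) (x y : P.X (n + 1)),
     P.face k true x = P.face k false y → P.thin (G n k x y)) ∧
  (∀ (n : ℕ) (k : Fin (n + 1)) (x y : P.X (n + 1)),
     P.face k true x = P.face k false y →
       P.face k.castSucc true (G n k x y) = y ∧
       P.face k.succ false (G n k x y) = x ∧
       P.face k.succ true (G n k x y) = E n k (P.face k true y)) ∧
  (∀ (n : ℕ) (k : Fin (n + 2)) (i : Fin (n + 3)) (α : Bool) (x y : P.X (n + 2)),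
     P.face k true x = P.face k false y → ∀ h : (i : ℕ) < (k : ℕ),
     P.face i α (G (n + 1) k x y) =
       G n ⟨(k : ℕ) - 1, by have := k.isLt; omega⟩
         (P.face ⟨(i : ℕ), by have := k.isLt; omega⟩ α x)
         (P.face ⟨(i : ℕ), by have := k.isLt; omega⟩ α y)) ∧
  (∀ (n : ℕ) (k : Fin (n + 2)) (i : Fin (n + 3)) (α : Bool) (x y : P.X (n + 2)),
     P.face k true x = P.face k false y → ∀ h : (k : ℕ) + 1 < (i : ℕ),
     P.face i α (G (n + 1) k x y) =
       G n ⟨(k : ℕ), by have := i.isLt; omega⟩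
         (P.face ⟨(i : ℕ) - 1, by have := i.isLt; omega⟩ α x)
         (P.face ⟨(i : ℕ) - 1, by have := i.isLt; omega⟩ α y))

/-- The composite `x ∘_k y = ∂_k^- G_k(x, y)`. -/
def SPS.cmp (P : SPS) (G : ∀ n : ℕ, Fin (n + 1) → P.X (n + 1) → P.X (n + 1) → P.X (n + 2))
    {n : ℕ} (k : Fin (n + 1)) (x y : P.X (n + 1)) : P.X (n + 1) :=
  P.face k.castSucc false (G n k x y)


/-! ### Auxiliary machinery -/

/-- One face operation on a dimension-indexed sigma type. -/
def fceS (P : SPS) (p : ℕ × Bool) (w : Σ n, P.X n) : Σ n, P.X n :=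
  ⟨w.1 - 1, P.faceN p.1 p.2 w.2⟩

/-- A list of face operations (head outermost) on the sigma type. -/
def apOpS (P : SPS) (L : List (ℕ × Bool)) (w : Σ n, P.X n) : Σ n, P.X n :=
  L.foldr (fceS P) w

lemma apOpS_concat (P : SPS) (L : List (ℕ × Bool)) (q : ℕ × Bool) (w : Σ n, P.X n) :
    apOpS P (L ++ [q]) w = apOpS P L (fceS P q w) := by
  simp [apOpS, List.foldr_append]

lemma apBox_eq (P : SPS) : ∀ (L : List (ℕ × Bool)) (p : ℕ × Bool) (m : ℕ) (g : P.X (m + 1)),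
    (⟨m - L.length, P.apBoxAux (fun i α => P.face i α g) p L⟩ : Σ n, P.X n) =
      apOpS P (p :: L) ⟨m + 1, g⟩ := by
  intro L
  induction L with
  | nil => intro p m g; rfl
  | cons q L ih =>
    intro p m g
    show _ = fceS P p (apOpS P (q :: L) ⟨m + 1, g⟩)
    rw [← ih q m g]
    rfl

lemma faceN_eq_face (P : SPS) {m : ℕ} (i : ℕ) (α : Bool) (x : P.X (m + 1))
    (j : Fin (m + 1)) (hj : (j : ℕ) = i - 1) (hle : i - 1 ≤ m) :
    P.faceN i α x = P.face j α x := by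
  show P.face ⟨min (i - 1) m, Nat.lt_succ_of_le (Nat.min_le_right _ _)⟩ α x = P.face j α x
  congr 1
  exact Fin.ext (by simp [Nat.min_eq_left hle, hj])

lemma face_comm_lo (P : SPS) {m : ℕ} (k : Fin (m + 2)) (x y : P.X (m + 2))
    (h : P.face k true x = P.face k false y) (i : Fin (m + 2)) (hi : (i : ℕ) < (k : ℕ))
    (δ : Bool) (kk : Fin (m + 1)) (hkk : (kk : ℕ) + 1 = (k : ℕ)) :
    P.face kk true (P.face i δ x) = P.face kk false (P.face i δ y) := by
  have e1 := P.face_rel (n := m + 2) i kk (by omega) true δ x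
  have e2 := P.face_rel (n := m + 2) i kk (by omega) false δ y
  rw [e1, e2]
  have hke : (⟨(kk : ℕ) + 1, by omega⟩ : Fin (m + 2)) = k := Fin.ext (by simpa using hkk)
  rw [hke, h]

lemma face_comm_hi (P : SPS) {m : ℕ} (k : Fin (m + 2)) (x y : P.X (m + 2))
    (h : P.face k true x = P.face k false y) (j : Fin (m + 2)) (hj : (k : ℕ) < (j : ℕ))
    (δ : Bool) (kk : Fin (m + 1)) (hkk : (kk : ℕ) = (k : ℕ)) :
    P.face kk true (P.face j δ x) = P.face kk false (P.face j δ y) := by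
  obtain ⟨jv, hjl⟩ := j
  simp only [Fin.val_mk] at hj
  obtain ⟨c, rfl⟩ : ∃ c, jv = c + 1 := ⟨jv - 1, by omega⟩
  obtain ⟨kv, hkl⟩ := kk
  simp only [Fin.val_mk] at hkk
  subst hkk
  have e1 := P.face_rel (n := m + 2) k ⟨c, by omega⟩ (show (k : ℕ) ≤ c by omega) δ true x
  have e2 := P.face_rel (n := m + 2) k ⟨c, by omega⟩ (show (k : ℕ) ≤ c by omega) δ false y
  calc P.face ⟨(k : ℕ), hkl⟩ true (P.face ⟨c + 1, hjl⟩ δ x)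
      = P.face (⟨c, by omega⟩ : Fin (m + 1)) δ (P.face k true x) := e1.symm
    _ = P.face (⟨c, by omega⟩ : Fin (m + 1)) δ (P.face k false y) := by rw [h]
    _ = P.face ⟨(k : ℕ), hkl⟩ false (P.face ⟨c + 1, hjl⟩ δ y) := e2

/-! ### insSorted lemmas -/

lemma insSorted_cons_of_le (a p : ℕ × Bool) (L : List (ℕ × Bool)) (h : a.1 ≤ p.1) :
    insSorted a (p :: L) = a :: p :: L := by
  simp only [insSorted, if_pos h]

lemma insSorted_cons_of_gt (a p : ℕ × Bool) (L : List (ℕ × Bool)) (h : p.1 < a.1) :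
    insSorted a (p :: L) = p :: insSorted a L := by
  simp only [insSorted, if_neg (by omega : ¬ a.1 ≤ p.1)]

lemma insSorted_append (a : ℕ × Bool) (L M : List (ℕ × Bool)) (hL : ∀ p ∈ L, p.1 < a.1) :
    insSorted a (L ++ M) = L ++ insSorted a M := by
  induction L with
  | nil => simp
  | cons p L ih =>
    rw [List.cons_append, insSorted_cons_of_gt _ _ _ (hL p (by simp)),
      ih (fun p hp => hL p (by simp [hp])), List.cons_append]

lemma insSorted_of_lt (a : ℕ × Bool) (L : List (ℕ × Bool)) (hL : ∀ p ∈ L, p.1 < a.1) :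
    insSorted a L = L ++ [a] := by
  have := insSorted_append a L [] hL
  simpa [insSorted] using this

lemma insSorted_concat (a q : ℕ × Bool) (L : List (ℕ × Bool)) (h : a.1 ≤ q.1) :
    insSorted a (L ++ [q]) = insSorted a L ++ [q] := by
  induction L with
  | nil =>
    rw [List.nil_append, insSorted_cons_of_le _ _ _ h]
    rfl
  | cons p L ih =>
    by_cases hap : a.1 ≤ p.1
    · rw [List.cons_append, insSorted_cons_of_le _ _ _ hap, insSorted_cons_of_le _ _ _ hap]
      rfl
    · rw [List.cons_append, insSorted_cons_of_gt _ _ _ (by omega),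
        insSorted_cons_of_gt _ _ _ (by omega), ih, List.cons_append]

/-! ### ConstSign lemmas -/

lemma constSign_append_right {L M : List (ℕ × Bool)} (h : ConstSign (L ++ M)) :
    ConstSign L := by
  obtain ⟨ε, hε⟩ := h
  refine ⟨ε, fun t ht => ?_⟩
  have h1 := hε t (by simp; omega)
  simp only [List.get_eq_getElem] at h1 ⊢
  rwa [List.getElem_append_left ht] at h1

lemma constSign_step (L : List (ℕ × Bool)) (a : ℕ × Bool) (c : ℕ)
    (h : ConstSign (L ++ [a, (c + 1, true)])) : ConstSign (L ++ [(c, true)]) := by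
  obtain ⟨ε, hε⟩ := h
  refine ⟨ε, fun t ht => ?_⟩
  have htlen : t < L.length + 1 := by simpa using ht
  rcases Nat.lt_or_ge t L.length with hlt | hge
  · have h1 := hε t (by simp; omega)
    simp only [List.get_eq_getElem] at h1 ⊢
    rwa [List.getElem_append_left hlt] at h1 ⊢
  · have ht' : t = L.length := by omega
    subst ht'
    have h2 := hε (L.length + 1) (by simp)
    have e2 : (L ++ [a, (c + 1, true)])[L.length + 1]'(by simp) = (c + 1, true) := by
      rw [List.getElem_append_right (by omega)]
      simp
    have e1 : (L ++ [(c, true)])[L.length]'(by simp) = (c, true) := by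
      rw [List.getElem_append_right (by omega)]
      simp
    simp only [List.get_eq_getElem] at h2 ⊢
    rw [e2] at h2
    rw [e1]
    have hs : ((-1 : ℤ)) ^ (c + 1 + (L.length + 1) + 1) = (-1) ^ (c + L.length + 1) := by
      rw [show c + 1 + (L.length + 1) + 1 = c + L.length + 1 + 2 by omega, pow_add]
      norm_num
    rw [hs] at h2
    exact h2

lemma constSign_contra (L : List (ℕ × Bool)) (c : ℕ) :
    ¬ ConstSign (L ++ [(c + 1, true), (c + 2, false)]) := by
  rintro ⟨ε, hε⟩
  have h1 := hε L.length (by simp)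
  have h2 := hε (L.length + 1) (by simp)
  have e1 : (L ++ [(c + 1, true), (c + 2, false)])[L.length]'(by simp) = (c + 1, true) := by
    rw [List.getElem_append_right (by omega)]
    simp
  have e2 : (L ++ [(c + 1, true), (c + 2, false)])[L.length + 1]'(by simp) = (c + 2, false) := by
    rw [List.getElem_append_right (by omega)]
    simp
  simp only [List.get_eq_getElem] at h1 h2
  rw [e1] at h1
  rw [e2] at h2
  have hs : ((-1 : ℤ)) ^ (c + 2 + (L.length + 1) + 1) = (-1) ^ (c + 1 + L.length + 1) := by
    rw [show c + 2 + (L.length + 1) + 1 = c + 1 + L.length + 1 + 2 by omega, pow_add]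
    norm_num
  rw [hs] at h2
  simp only [sgn] at h1 h2
  norm_num at h1 h2
  rcases neg_one_pow_eq_or ℤ (c + 1 + L.length + 1) with hh | hh <;> rw [hh] at h1 h2 <;> omega

/-! ### Chain' facts -/

lemma chain_concat_facts : ∀ (L : List (ℕ × Bool)) (q : ℕ × Bool),
    (L ++ [q]).Chain' (fun p r => p.1 < r.1) →
    L.Chain' (fun p r => p.1 < r.1) ∧ ∀ p ∈ L, p.1 < q.1 := by
  haveI : IsTrans (ℕ × Bool) (fun p r => p.1 < r.1) := ⟨fun _ _ _ => Nat.lt_trans⟩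
  intro L q hch
  haveI : Trans (fun p r : ℕ × Bool => p.1 < r.1) (fun p r : ℕ × Bool => p.1 < r.1)
      (fun p r : ℕ × Bool => p.1 < r.1) := ⟨fun h1 h2 => Nat.lt_trans h1 h2⟩
  rw [List.Chain', List.isChain_iff_pairwise, List.pairwise_append] at hch
  refine ⟨List.isChain_iff_pairwise.mpr hch.1, fun p hp => hch.2.2 p hp q (by simp)⟩

/-! ### The degeneracy lemma -/

lemma thin_apOp_E (P : SPS) (E : ∀ n : ℕ, Fin (n + 1) → P.X n → P.X (n + 1))
    (hE : P.IsDegSys E) :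
    ∀ (N : ℕ) (θ : List (ℕ × Bool)), θ.length ≤ N →
    ∀ (m : ℕ) (k : Fin (m + 1)) (z : P.X m),
      θ.Chain' (fun p q => p.1 < q.1) →
      (∀ p ∈ θ, 1 ≤ p.1 ∧ p.1 ≤ (k : ℕ)) →
      P.thin ((apOpS P θ ⟨m + 1, E m k z⟩).2) := by
  intro N
  induction N with
  | zero =>
    intro θ hθ m k z _ _
    have : θ = [] := List.length_eq_zero_iff.mp (by omega)
    subst this
    exact hE.1 m k z
  | succ N ih =>
    intro θ hθ m k z hch hbd
    rcases List.eq_nil_or_concat θ with rfl | ⟨L, q, rfl⟩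
    · exact hE.1 m k z
    rw [List.concat_eq_append] at *
    obtain ⟨hchL, hlt⟩ := chain_concat_facts L q hch
    have hq := hbd q (by simp)
    rcases m with _ | m'
    · exact absurd hq.2 (by have := k.isLt; omega)
    rw [apOpS_concat]
    have hf : P.faceN q.1 q.2 (E (m' + 1) k z) =
        E m' ⟨(k : ℕ) - 1, by have := k.isLt; omega⟩
          (P.face ⟨q.1 - 1, by have := k.isLt; omega⟩ q.2 z) := by
      rw [faceN_eq_face P q.1 q.2 _ ⟨q.1 - 1, by have := k.isLt; omega⟩ rfl
        (by have := k.isLt; omega)]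
      exact hE.2.2.1 m' k ⟨q.1 - 1, by have := k.isLt; omega⟩ q.2 z (show q.1 - 1 < (k : ℕ) by omega)
    have hstep : fceS P q ⟨m' + 2, E (m' + 1) k z⟩ =
        ⟨m' + 1, E m' ⟨(k : ℕ) - 1, by have := k.isLt; omega⟩
          (P.face ⟨q.1 - 1, by have := k.isLt; omega⟩ q.2 z)⟩ :=
      congrArg (fun w => (⟨m' + 1, w⟩ : Σ n, P.X n)) hf
    rw [hstep]
    refine ih L (by simp at hθ; omega) m' _ _ hchL ?_
    intro p hp
    have := hbd p (by simp [hp])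
    have := hlt p hp
    show 1 ≤ p.1 ∧ p.1 ≤ (k : ℕ) - 1
    omega

/-! ### The main lemma: complementary operations applied to `G` are thin -/

lemma thin_apOp_G (P : SPS) (E : ∀ n : ℕ, Fin (n + 1) → P.X n → P.X (n + 1))
    (hE : P.IsDegSys E)
    (G : ∀ n : ℕ, Fin (n + 1) → P.X (n + 1) → P.X (n + 1) → P.X (n + 2))
    (hG : P.IsCompSys E G) :
    ∀ (N : ℕ) (θ : List (ℕ × Bool)), θ.length ≤ N →
    ∀ (m : ℕ) (k : Fin (m + 1)) (x y : P.X (m + 1)),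
      P.face k true x = P.face k false y →
      θ.Chain' (fun p q => p.1 < q.1) →
      (∀ p ∈ θ, 1 ≤ p.1 ∧ p.1 ≤ m + 2) →
      (∀ p ∈ θ, p.1 ≠ (k : ℕ) + 1) →
      ConstSign (insSorted ((k : ℕ) + 1, true) θ) →
      P.thin ((apOpS P θ ⟨m + 2, G m k x y⟩).2) := by
  intro N
  induction N with
  | zero =>
    intro θ hθ m k x y hm _ _ _ _
    have : θ = [] := List.length_eq_zero_iff.mp (by omega)
    subst this
    exact hG.1 m k x y hm
  | succ N ih =>
    intro θ hθ m k x y hm hch hbd hav hsg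
    rcases List.eq_nil_or_concat θ with rfl | ⟨L, q, rfl⟩
    · exact hG.1 m k x y hm
    rw [List.concat_eq_append] at *
    obtain ⟨hchL, hlt⟩ := chain_concat_facts L q hch
    have hq := hbd q (by simp)
    have hqk := hav q (by simp)
    have hLN : L.length ≤ N := by simp at hθ; omega
    rw [apOpS_concat]
    rcases (by omega : q.1 ≤ (k : ℕ) ∨ q.1 = (k : ℕ) + 2 ∨ (k : ℕ) + 3 ≤ q.1) with hA | hB | hC
    · -- q.1 ≤ k : lowest faces
      rcases m with _ | m'
      · exact absurd hq.1 (by have := k.isLt; omega)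
      have hf : P.faceN q.1 q.2 (G (m' + 1) k x y) =
          G m' ⟨(k : ℕ) - 1, by have := k.isLt; omega⟩
            (P.face ⟨q.1 - 1, by have := k.isLt; omega⟩ q.2 x)
            (P.face ⟨q.1 - 1, by have := k.isLt; omega⟩ q.2 y) := by
        rw [faceN_eq_face P q.1 q.2 _ ⟨q.1 - 1, by have := k.isLt; omega⟩ rfl
          (by have := k.isLt; omega)]
        exact hG.2.2.1 m' k ⟨q.1 - 1, by have := k.isLt; omega⟩ q.2 x y hm (show q.1 - 1 < (k : ℕ) by omega)
      have hstep : fceS P q ⟨m' + 3, G (m' + 1) k x y⟩ =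
          ⟨m' + 2, G m' ⟨(k : ℕ) - 1, by have := k.isLt; omega⟩
            (P.face ⟨q.1 - 1, by have := k.isLt; omega⟩ q.2 x)
            (P.face ⟨q.1 - 1, by have := k.isLt; omega⟩ q.2 y)⟩ :=
        congrArg (fun w => (⟨m' + 2, w⟩ : Σ n, P.X n)) hf
      rw [hstep]
      refine ih L hLN m' _ _ _
        (face_comm_lo P k x y hm ⟨q.1 - 1, by have := k.isLt; omega⟩
          (show q.1 - 1 < (k : ℕ) by omega) q.2 _ (show (k : ℕ) - 1 + 1 = (k : ℕ) by omega))
        hchL (fun p hp => ?_) (fun p hp => ?_) ?_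
      · have h1 := hbd p (by simp [hp]); have h2 := hlt p hp
        constructor <;> omega
      · have h2 := hlt p hp
        show p.1 ≠ (k : ℕ) - 1 + 1
        omega
      · show ConstSign (insSorted ((k : ℕ) - 1 + 1, true) L)
        rw [show (k : ℕ) - 1 + 1 = (k : ℕ) by omega,
          insSorted_of_lt _ _ (fun p hp => by have := hlt p hp; omega)]
        refine constSign_step L q (k : ℕ) ?_
        rw [insSorted_append _ _ _
            (fun p hp => (by have := hlt p hp; omega : p.1 < (k : ℕ) + 1)),
          insSorted_cons_of_gt _ _ _ (show q.1 < (k : ℕ) + 1 by omega)] at hsg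
        exact hsg
    · -- q.1 = k + 2
      rcases q with ⟨q1, q2⟩
      simp only at hB
      subst hB
      rcases q2 with _ | _
      · -- sign -, contradiction with ConstSign
        exfalso
        rw [insSorted_append _ _ _
            (fun p hp => (by have h1 := hlt p hp; have h2 := hav p (by simp [hp]); simp at h1; omega : p.1 < (k : ℕ) + 1)),
          insSorted_cons_of_le _ _ _ (show (k : ℕ) + 1 ≤ (k : ℕ) + 2 by omega)] at hsg
        exact constSign_contra L (k : ℕ) (by simpa using hsg)
      · -- sign +, this face is a degeneracy
        have hf : P.faceN ((k : ℕ) + 2) true (G m k x y) =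
            E m k (P.face k true y) := by
          rw [faceN_eq_face P ((k : ℕ) + 2) true _ ⟨(k : ℕ) + 1, by have := k.isLt; omega⟩ rfl
            (by have := k.isLt; omega)]
          exact (hG.2.1 m k x y hm).2.2
        have hstep : fceS P ((k : ℕ) + 2, true) ⟨m + 2, G m k x y⟩ =
            ⟨m + 1, E m k (P.face k true y)⟩ :=
          congrArg (fun w => (⟨m + 1, w⟩ : Σ n, P.X n)) hf
        rw [hstep]
        refine thin_apOp_E P E hE L.length L le_rfl m k _ hchL (fun p hp => ?_)
        have h1 := hbd p (by simp [hp])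
        have h2 := hlt p hp
        have h3 := hav p (by simp [hp])
        simp at h2
        constructor <;> omega
    · -- q.1 ≥ k + 3 : highest faces
      rcases m with _ | m'
      · exact absurd hq.2 (by have := k.isLt; omega)
      have hf : P.faceN q.1 q.2 (G (m' + 1) k x y) =
          G m' ⟨(k : ℕ), by omega⟩
            (P.face ⟨q.1 - 1 - 1, by have := k.isLt; omega⟩ q.2 x)
            (P.face ⟨q.1 - 1 - 1, by have := k.isLt; omega⟩ q.2 y) := by
        rw [faceN_eq_face P q.1 q.2 _ ⟨q.1 - 1, by omega⟩ rfl (by omega)]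
        exact hG.2.2.2 m' k ⟨q.1 - 1, by omega⟩ q.2 x y hm (show (k : ℕ) + 1 < q.1 - 1 by omega)
      have hstep : fceS P q ⟨m' + 3, G (m' + 1) k x y⟩ =
          ⟨m' + 2, G m' ⟨(k : ℕ), by omega⟩
            (P.face ⟨q.1 - 1 - 1, by have := k.isLt; omega⟩ q.2 x)
            (P.face ⟨q.1 - 1 - 1, by have := k.isLt; omega⟩ q.2 y)⟩ :=
        congrArg (fun w => (⟨m' + 2, w⟩ : Σ n, P.X n)) hf
      rw [hstep]
      refine ih L hLN m' _ _ _
        (face_comm_hi P k x y hm ⟨q.1 - 1 - 1, by have := k.isLt; omega⟩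
          (show (k : ℕ) < q.1 - 1 - 1 by omega) q.2 _ rfl)
        hchL (fun p hp => ?_) (fun p hp => ?_) ?_
      · have h1 := hbd p (by simp [hp]); have h2 := hlt p hp
        constructor <;> omega
      · have h2 := hav p (by simp [hp])
        show p.1 ≠ (k : ℕ) + 1
        omega
      · show ConstSign (insSorted ((k : ℕ) + 1, true) L)
        rw [insSorted_concat _ _ _ (show (k : ℕ) + 1 ≤ q.1 by omega)] at hsg
        exact constSign_append_right (M := [q]) hsg

/-- in a complete stratified precubical set, if `x ∘_k y` is a composite
such that `x` and `y` are thin, then `x ∘_k y` is thin. -/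
theorem comp_of_thin_is_thin (P : SPS) (hP : P.IsComplete)
    (E : ∀ n : ℕ, Fin (n + 1) → P.X n → P.X (n + 1)) (hE : P.IsDegSys E)
    (G : ∀ n : ℕ, Fin (n + 1) → P.X (n + 1) → P.X (n + 1) → P.X (n + 2))
    (hG : P.IsCompSys E G)
    (n : ℕ) (k : Fin (n + 1)) (x y : P.X (n + 1))
    (h : P.face k true x = P.face k false y)
    (hx : P.thin x) (hy : P.thin y) :
    P.thin (P.cmp G k x y) := by
  set b : Fin (n + 2) → Bool → P.X (n + 1) := fun i α => P.face i α (G n k x y) with hb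
  have hbox : P.IsBox k.castSucc false b :=
    fun j i hji α β _ _ => P.face_rel j i hji α β (G n k x y)
  have hadm : P.AdmBox k.castSucc false b := by
    refine ⟨hbox, fun p L hC => ?_⟩
    obtain ⟨⟨hchain, hbounds⟩, havoid, hsign⟩ := hC
    have hmain : P.thin ((apOpS P (p :: L) ⟨n + 2, G n k x y⟩).2) := by
      refine thin_apOp_G P E hE G hG (p :: L).length (p :: L) le_rfl n k x y h hchain
        (fun r hr => hbounds r hr) (fun r hr => by simpa using havoid r hr) ?_
      simpa using hsign
    rw [← apBox_eq P L p (n + 1) (G n k x y)] at hmain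
    exact hmain
  have hfill : P.FillsBox k.castSucc false b (G n k x y) := fun i α _ => rfl
  have hent : ∀ (i : Fin (n + 2)) (α : Bool),
      ((i, α) : Fin (n + 2) × Bool) ≠ (k.castSucc, false) → P.thin (b i α) := by
    intro i α hne
    show P.thin (P.face i α (G n k x y))
    rcases Nat.lt_trichotomy (i : ℕ) (k : ℕ) with hik | hik | hik
    · -- i < k
      cases n with
      | zero => exact absurd hik (by have := k.isLt; omega)
      | succ n' =>
        rw [hG.2.2.1 n' k i α x y h hik]
        exact hG.1 n' _ _ _
          (face_comm_lo P k x y h ⟨(i : ℕ), by have := k.isLt; omega⟩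
            (show (i : ℕ) < (k : ℕ) from hik) α _ (show (k : ℕ) - 1 + 1 = (k : ℕ) by omega))
    · -- i = k
      have hik' : i = k.castSucc := Fin.ext (by simpa using hik)
      cases α with
      | false => exact absurd (by rw [hik']) hne
      | true =>
        rw [hik', (hG.2.1 n k x y h).1]
        exact hy
    · -- i > k
      rcases (by omega : (i : ℕ) = (k : ℕ) + 1 ∨ (k : ℕ) + 1 < (i : ℕ)) with hik1 | hik1
      · have hik' : i = k.succ := Fin.ext (by simpa using hik1)
        cases α with
        | false =>
          rw [hik', (hG.2.1 n k x y h).2.1]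
          exact hx
        | true =>
          rw [hik', (hG.2.1 n k x y h).2.2]
          exact hE.1 n k _
      · cases n with
        | zero => exact absurd hik1 (by have := k.isLt; have := i.isLt; omega)
        | succ n' =>
          rw [hG.2.2.2 n' k i α x y h hik1]
          exact hG.1 n' _ _ _
            (face_comm_hi P k x y h ⟨(i : ℕ) - 1, by have := i.isLt; omega⟩
              (show (k : ℕ) < (i : ℕ) - 1 by omega) α _ rfl)
  exact hP.2.2 (n + 1) k.castSucc false b (G n k x y) hadm (hG.1 n k x y h) hfill hent

end CubicalNerve
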